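/- (Expander Mixing Lemma for contingency tables) Let C be an n×m nonnegative matrix with total sum 1, positive row and column sums, and let s₂ be the second largest singular value of the correspondence matrix C_corr = D_row^{-1/2} C D_col^{-1/2}. Then for all subsets R of rows and C' of columns: |c(R,C') − Vol(R)·Vol(C')| ≤ s₂ · sqrt(Vol(R)·Vol(C')), where c(R,C') = Σ_{i∈R} Σ_{j∈C'} c_ij, Vol(R) = Σ_{i∈R} d_row,i, Vol(C') = Σ_{j∈C'} d_col,j. -/

import Mathlib

noncomputable def specNorm {n m : ℕ} (A : Matrix (Fin n) (Fin m) ℝ) : ℝ :=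
  ‖(Matrix.toEuclideanLin A).toContinuousLinearMap‖

/-- Expander Mixing Lemma for contingency tables. The second largest singular
value `s₂` of the correspondence matrix is the spectral norm of the correspondence
matrix after deflating the top singular pair `(v₁, u₁)`. -/
theorem expander_mixing_contingency {n m : ℕ}
    (C : Matrix (Fin n) (Fin m) ℝ) (hC : ∀ i j, 0 ≤ C i j)
    (htot : ∑ i, ∑ j, C i j = 1)
    (drow : Fin n → ℝ) (dcol : Fin m → ℝ)
    (hdrow : ∀ i, drow i = ∑ j, C i j) (hdcol : ∀ j, dcol j = ∑ i, C i j)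
    (hrpos : ∀ i, 0 < drow i) (hcpos : ∀ j, 0 < dcol j)
    (Ccorr : Matrix (Fin n) (Fin m) ℝ)
    (hCcorr : ∀ i j, Ccorr i j = C i j / (Real.sqrt (drow i) * Real.sqrt (dcol j)))
    (s₂ : ℝ)
    (hs₂ : s₂ = specNorm (Ccorr - Matrix.vecMulVec (fun i => Real.sqrt (drow i))
      (fun j => Real.sqrt (dcol j)))) :
    ∀ R : Finset (Fin n), ∀ C' : Finset (Fin m),
      |(∑ i ∈ R, ∑ j ∈ C', C i j) - (∑ i ∈ R, drow i) * (∑ j ∈ C', dcol j)|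
        ≤ s₂ * Real.sqrt ((∑ i ∈ R, drow i) * (∑ j ∈ C', dcol j)) := by
  intro R Cs
  set M : Matrix (Fin n) (Fin m) ℝ :=
    Ccorr - Matrix.vecMulVec (fun i => Real.sqrt (drow i)) (fun j => Real.sqrt (dcol j)) with hM
  set x : EuclideanSpace ℝ (Fin n) := WithLp.toLp 2 (fun i => if i ∈ R then Real.sqrt (drow i) else 0) with hx
  set y : EuclideanSpace ℝ (Fin m) := WithLp.toLp 2 (fun j => if j ∈ Cs then Real.sqrt (dcol j) else 0) with hy
  have hin0 : (inner ℝ x (Matrix.toEuclideanLin M y) : ℝ) = ∑ i, x i * ∑ j, M i j * y j := by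
    rw [Matrix.toEuclideanLin_apply]
    simp [PiLp.inner_apply, RCLike.inner_apply, Matrix.mulVec, dotProduct]
    exact Finset.sum_congr rfl fun _ _ => mul_comm _ _
  have hterm : ∀ i ∈ R, ∀ j ∈ Cs,
      Real.sqrt (drow i) * M i j * Real.sqrt (dcol j) = C i j - drow i * dcol j := by
    intro i _ j _
    have ha : Real.sqrt (drow i) ≠ 0 := ne_of_gt (Real.sqrt_pos.mpr (hrpos i))
    have hb : Real.sqrt (dcol j) ≠ 0 := ne_of_gt (Real.sqrt_pos.mpr (hcpos j))
    have ha2 : Real.sqrt (drow i) * Real.sqrt (drow i) = drow i :=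
      Real.mul_self_sqrt (hrpos i).le
    have hb2 : Real.sqrt (dcol j) * Real.sqrt (dcol j) = dcol j :=
      Real.mul_self_sqrt (hcpos j).le
    simp only [hM, Matrix.sub_apply, Matrix.vecMulVec_apply, hCcorr]
    rw [mul_sub, sub_mul]
    congr 1
    · field_simp
    · rw [show Real.sqrt (drow i) * (Real.sqrt (drow i) * Real.sqrt (dcol j)) * Real.sqrt (dcol j)
          = (Real.sqrt (drow i) * Real.sqrt (drow i)) * (Real.sqrt (dcol j) * Real.sqrt (dcol j))
          from by ring, ha2, hb2]
  have hinner : (inner ℝ x (Matrix.toEuclideanLin M y) : ℝ)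
      = (∑ i ∈ R, ∑ j ∈ Cs, C i j) - (∑ i ∈ R, drow i) * (∑ j ∈ Cs, dcol j) := by
    rw [hin0]
    have hstep : ∀ i, x i * ∑ j, M i j * y j
        = if i ∈ R then ∑ j ∈ Cs, (C i j - drow i * dcol j) else 0 := by
      intro i
      by_cases hi : i ∈ R
      · simp only [hx, PiLp.toLp_apply, hi, if_pos]
        have : (∑ j, M i j * y j) = ∑ j ∈ Cs, M i j * Real.sqrt (dcol j) := by
          simp only [hy, PiLp.toLp_apply]
          rw [Finset.sum_congr rfl (fun j _ => by rw [mul_ite, mul_zero]),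
            Finset.sum_ite_mem, Finset.univ_inter]
        rw [this, Finset.mul_sum]
        refine Finset.sum_congr rfl fun j hj => ?_
        rw [← hterm i hi j hj]; ring
      · simp [hx, hi]
    rw [Finset.sum_congr rfl fun i _ => hstep i, Finset.sum_ite_mem, Finset.univ_inter,
      Finset.sum_congr rfl fun i _ => Finset.sum_sub_distrib (s := Cs) (fun j => C i j) (fun j => drow i * dcol j), Finset.sum_sub_distrib]
    congr 1
    rw [Finset.sum_mul_sum]
  have hnx : ‖x‖ = Real.sqrt (∑ i ∈ R, drow i) := by
    rw [EuclideanSpace.norm_eq]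
    congr 1
    have h : ∀ i, ‖x i‖ ^ 2 = if i ∈ R then drow i else 0 := by
      intro i
      by_cases hi : i ∈ R <;>
        simp [hx, hi, Real.norm_eq_abs, sq_abs, Real.sq_sqrt (hrpos i).le]
    rw [Finset.sum_congr rfl fun i _ => h i, Finset.sum_ite_mem, Finset.univ_inter]
  have hny : ‖y‖ = Real.sqrt (∑ j ∈ Cs, dcol j) := by
    rw [EuclideanSpace.norm_eq]
    congr 1
    have h : ∀ j, ‖y j‖ ^ 2 = if j ∈ Cs then dcol j else 0 := by
      intro j
      by_cases hj : j ∈ Cs <;>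
        simp [hy, hj, Real.norm_eq_abs, sq_abs, Real.sq_sqrt (hcpos j).le]
    rw [Finset.sum_congr rfl fun j _ => h j, Finset.sum_ite_mem, Finset.univ_inter]
  set T := (Matrix.toEuclideanLin M).toContinuousLinearMap with hT
  have hTy : T y = Matrix.toEuclideanLin M y := rfl
  have hbound : |(inner ℝ x (Matrix.toEuclideanLin M y) : ℝ)| ≤ ‖T‖ * ‖x‖ * ‖y‖ := by
    calc |(inner ℝ x (Matrix.toEuclideanLin M y) : ℝ)|
        ≤ ‖x‖ * ‖Matrix.toEuclideanLin M y‖ := abs_real_inner_le_norm _ _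
      _ = ‖x‖ * ‖T y‖ := by rw [hTy]
      _ ≤ ‖x‖ * (‖T‖ * ‖y‖) := by
          exact mul_le_mul_of_nonneg_left (T.le_opNorm y) (norm_nonneg x)
      _ = ‖T‖ * ‖x‖ * ‖y‖ := by ring
  rw [← hinner]
  have hs₂' : s₂ = ‖T‖ := hs₂
  rw [hs₂', Real.sqrt_mul (Finset.sum_nonneg fun i _ => (hrpos i).le), ← hnx, ← hny]
  calc |(inner ℝ x (Matrix.toEuclideanLin M y) : ℝ)| ≤ ‖T‖ * ‖x‖ * ‖y‖ := hbound
    _ = ‖T‖ * (‖x‖ * ‖y‖) := by ring
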